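/- Let L be a Leibniz algebra over a field 𝕜 with left center Z. The representable cochains form a subcomplex: if ω ∈ C̃^n(L) is representable, then dω ∈ C^{n+1}(L) is representable. -/

import Mathlib

open scoped TensorProduct

universe u v w

/-- A (left) Leibniz algebra over a field `𝕜`. -/
structure LeibnizAlg (𝕜 : Type u) [Field 𝕜] (L : Type v) [AddCommGroup L] [Module 𝕜 L] where
  br : L →ₗ[𝕜] L →ₗ[𝕜] L
  leibniz : ∀ a b c : L, br a (br b c) = br (br a b) c + br b (br a c)

namespace LeibnizAlg

variable {𝕜 : Type u} [Field 𝕜] {L : Type v} [AddCommGroup L] [Module 𝕜 L]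
variable (A : LeibnizAlg 𝕜 L)

/-- The left center `Z = {z | z ∘ e = 0 for all e}`. -/
def leftCenter : Submodule 𝕜 L where
  carrier := {z | ∀ e : L, A.br z e = 0}
  add_mem' := by
    intro a b ha hb
    simp only [Set.mem_setOf_eq] at *
    intro e
    rw [map_add, LinearMap.add_apply, ha e, hb e, add_zero]
  zero_mem' := by
    simp only [Set.mem_setOf_eq]
    intro e
    rw [map_zero, LinearMap.zero_apply]
  smul_mem' := by
    intro c x hx
    simp only [Set.mem_setOf_eq] at *
    intro e
    rw [map_smul, LinearMap.smul_apply, hx e, smul_zero]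

lemma mem_leftCenter_iff {z : L} : z ∈ A.leftCenter ↔ ∀ e : L, A.br z e = 0 := Iff.rfl

/-- The symmetric product `(a,b) = a∘b + b∘a`. -/
def sp (a b : L) : L := A.br a b + A.br b a

lemma sp_mem (a b : L) : A.sp a b ∈ A.leftCenter := by
  rw [mem_leftCenter_iff]
  intro e
  have h1 := A.leibniz a b e
  have h2 := A.leibniz b a e
  have hx : A.br (A.br a b) e = A.br a (A.br b e) - A.br b (A.br a e) :=
    eq_sub_iff_add_eq.mpr h1.symm
  have hy : A.br (A.br b a) e = A.br b (A.br a e) - A.br a (A.br b e) :=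
    eq_sub_iff_add_eq.mpr h2.symm
  rw [sp, map_add, LinearMap.add_apply, hx, hy]
  abel

/-- The symmetric product, seen as valued in the left center. -/
def spZ (a b : L) : A.leftCenter := ⟨A.sp a b, A.sp_mem a b⟩

lemma br_mem (e : L) (f : A.leftCenter) : A.br e (f : L) ∈ A.leftCenter := by
  rw [mem_leftCenter_iff]
  intro e'
  have h := A.leibniz e (f : L) e'
  have hf : A.br (f : L) e' = 0 := (A.mem_leftCenter_iff.mp f.2) e'
  have hf2 : A.br (f : L) (A.br e e') = 0 := (A.mem_leftCenter_iff.mp f.2) _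
  rw [hf] at h
  rw [map_zero] at h
  rw [hf2, add_zero] at h
  exact h.symm

/-- The bracket of `L` on its left center. -/
def brZ (e : L) (f : A.leftCenter) : A.leftCenter := ⟨A.br e (f : L), A.br_mem e f⟩

/-- The symmetric product as a bilinear map into the left center. -/
noncomputable def spL : L →ₗ[𝕜] L →ₗ[𝕜] A.leftCenter :=
  LinearMap.mk₂ 𝕜 A.spZ
    (fun a a' b => Subtype.ext (by
      simp only [spZ, sp, map_add, LinearMap.add_apply, Submodule.coe_add]
      abel))
    (fun c a b => Subtype.ext (by
      simp only [spZ, sp, map_smul, LinearMap.smul_apply, SetLike.val_smul, smul_add]))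
    (fun a b b' => Subtype.ext (by
      simp only [spZ, sp, map_add, LinearMap.add_apply, Submodule.coe_add]
      abel))
    (fun c a b => Subtype.ext (by
      simp only [spZ, sp, map_smul, LinearMap.smul_apply, SetLike.val_smul, smul_add]))

end LeibnizAlg

/-- `(S, ι)` is (a model of) the symmetric algebra of the module `Z`:
it satisfies the universal property. -/
def IsSymAlg {𝕜 : Type u} [Field 𝕜] {Z : Type v} [AddCommGroup Z] [Module 𝕜 Z]
    (S : Type w) [CommRing S] [Algebra 𝕜 S] (ι : Z →ₗ[𝕜] S) : Prop :=
  ∀ (B : Type (max u v w)) [CommRing B] [Algebra 𝕜 B] (g : Z →ₗ[𝕜] B),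
    ∃! h : S →ₐ[𝕜] B, ∀ z : Z, h (ι z) = g z

section Shuffles

/-- All ways of splitting a list into a signed pair of complementary subsequences. -/
def shSplits {α : Type*} : List α → List (ℤ × List α × List α)
  | [] => [(1, [], [])]
  | a :: l =>
      ((shSplits l).map fun t => (t.1, a :: t.2.1, t.2.2)) ++
      ((shSplits l).map fun t => ((-1) ^ t.2.1.length * t.1, t.2.1, a :: t.2.2))

/-- Signed sum over all `(p, l.length - p)`-shuffles of the list `l`. -/
def shSum {α : Type*} {S : Type*} [AddCommGroup S] (p : ℕ) (l : List α)
    (F : List α → List α → S) : S :=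
  (((shSplits l).filter fun t => t.2.1.length == p).map fun t => t.1 • F t.2.1 t.2.2).sum

/-- Unsigned sum over all `(p, l.length - p)`-shuffles of the list `l`. -/
def shSumU {α : Type*} {S : Type*} [AddCommMonoid S] (p : ℕ) (l : List α)
    (F : List α → List α → S) : S :=
  (((shSplits l).filter fun t => t.2.1.length == p).map fun t => F t.2.1 t.2.2).sum

end Shuffles

section Cochains

variable {𝕜 : Type u} [Field 𝕜] {L : Type v} [AddCommGroup L] [Module 𝕜 L]
variable (A : LeibnizAlg 𝕜 L)
variable (S : Type w) [CommRing S] [Algebra 𝕜 S]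
variable (ι : A.leftCenter →ₗ[𝕜] S)

/-- `ω` is an `n`-cochain in the standard complex `C(L) = C(L, Z, S^•(Z))`:
its component `ω k`, defined on tuples `es` of `n - 2k` elements of `L` and `k`
elements of the left center, is multilinear, symmetric in the `Z`-arguments, and
weakly skew-symmetric in the `L`-arguments. -/
structure IsCochain (n : ℕ) (ω : ℕ → List L → List A.leftCenter → S) : Prop where
  add_e : ∀ (k : ℕ) (p q : List L) (x y : L) (fs : List A.leftCenter),
    2*k + (p.length + 1 + q.length) = n → fs.length = k →
    ω k (p ++ (x + y) :: q) fs = ω k (p ++ x :: q) fs + ω k (p ++ y :: q) fs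
  smul_e : ∀ (k : ℕ) (p q : List L) (c : 𝕜) (x : L) (fs : List A.leftCenter),
    2*k + (p.length + 1 + q.length) = n → fs.length = k →
    ω k (p ++ (c • x) :: q) fs = c • ω k (p ++ x :: q) fs
  add_f : ∀ (k : ℕ) (es : List L) (p q : List A.leftCenter) (x y : A.leftCenter),
    2*k + es.length = n → p.length + 1 + q.length = k →
    ω k es (p ++ (x + y) :: q) = ω k es (p ++ x :: q) + ω k es (p ++ y :: q)
  smul_f : ∀ (k : ℕ) (es : List L) (p q : List A.leftCenter) (c : 𝕜) (x : A.leftCenter),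
    2*k + es.length = n → p.length + 1 + q.length = k →
    ω k es (p ++ (c • x) :: q) = c • ω k es (p ++ x :: q)
  symm_f : ∀ (k : ℕ) (es : List L) (p q : List A.leftCenter) (x y : A.leftCenter),
    2*k + es.length = n → p.length + 2 + q.length = k →
    ω k es (p ++ x :: y :: q) = ω k es (p ++ y :: x :: q)
  skew : ∀ (k : ℕ) (p q : List L) (x y : L) (fs : List A.leftCenter),
    2*k + (p.length + 2 + q.length) = n → fs.length = k →
    ω k (p ++ x :: y :: q) fs + ω k (p ++ y :: x :: q) fs
      = - ω (k+1) (p ++ q) (A.spZ x y :: fs)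

/-- The product of an `n`-cochain and an `m`-cochain. -/
def cmul (n m : ℕ) (ω η : ℕ → List L → List A.leftCenter → S) :
    ℕ → List L → List A.leftCenter → S :=
  fun k es fs => ∑ i ∈ Finset.range (k+1),
    if 2*i ≤ n ∧ 2*(k-i) ≤ m then
      shSum (n - 2*i) es fun es₁ es₂ =>
        shSumU i fs fun fs₁ fs₂ => ω i es₁ fs₁ * η (k-i) es₂ fs₂
    else 0

/-- The operator `d₀` of the standard complex, where `ρ` is the action of `L` on
`S^•(Z)` by derivations. -/
def cd0 (ρ : L → Derivation 𝕜 S S) (ω : ℕ → List L → List A.leftCenter → S) :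
    ℕ → List L → List A.leftCenter → S :=
  fun k es fs =>
    (∑ a ∈ Finset.range es.length,
      (-1 : ℤ)^a • ρ (es.getD a 0) (ω k (es.eraseIdx a) fs))
    + ∑ a ∈ Finset.range es.length, ∑ b ∈ Finset.Ico (a+1) es.length,
        (-1 : ℤ)^(a+1) •
          ω k ((es.eraseIdx a).set (b-1) (A.br (es.getD a 0) (es.getD b 0))) fs

/-- The operator `δ` of the standard complex. -/
def cdel (ω : ℕ → List L → List A.leftCenter → S) :
    ℕ → List L → List A.leftCenter → S :=
  fun k es fs => ∑ j ∈ Finset.range fs.length,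
    ω (k-1) (((fs.getD j 0 : A.leftCenter) : L) :: es) (fs.eraseIdx j)

/-- The symmetric product with values pushed into `S = S^•(Z)`. -/
noncomputable def spS : L →ₗ[𝕜] L →ₗ[𝕜] S := (A.spL).compr₂ ι

/-- The `S^•(Z)`-bilinear extension of the symmetric product to `S^•(Z) ⊗ L`. -/
noncomputable def pairT : (S ⊗[𝕜] L) →ₗ[𝕜] (S ⊗[𝕜] L) →ₗ[𝕜] S :=
  TensorProduct.curry <|
    (TensorProduct.lift (LinearMap.mul 𝕜 S)).comp <|
      (TensorProduct.map (TensorProduct.lift (LinearMap.mul 𝕜 S))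
        (TensorProduct.lift (spS A S ι))).comp
        (TensorProduct.tensorTensorTensorComm 𝕜 S L S L).toLinearMap

/-- `ω` is a representable `n`-cochain: each of the maps
`e ↦ ω k (es ++ [e]) fs` lies in the image of `φ = pairT`. -/
def IsRepr (n : ℕ) (ω : ℕ → List L → List A.leftCenter → S) : Prop :=
  ∀ (k : ℕ) (es : List L) (fs : List A.leftCenter),
    2*k + (es.length + 1) = n → fs.length = k →
    ∃ x : S ⊗[𝕜] L, ∀ e : L, pairT A S ι x ((1 : S) ⊗ₜ[𝕜] e) = ω k (es ++ [e]) fs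

/-- `ωt` is a choice of `φ`-preimages `ω̃` for the representable cochain `ω`. -/
def IsPre (n : ℕ) (ω : ℕ → List L → List A.leftCenter → S)
    (ωt : ℕ → List L → List A.leftCenter → S ⊗[𝕜] L) : Prop :=
  ∀ (k : ℕ) (es : List L) (fs : List A.leftCenter),
    2*k + (es.length + 1) = n → fs.length = k →
    ∀ e : L, pairT A S ι (ωt k es fs) ((1 : S) ⊗ₜ[𝕜] e) = ω k (es ++ [e]) fs

/-- `ωc k es x fs` is the extension `ω̌` of `ω (k+1) es (·::fs)` from `Z` to all of
`S = S^•(Z)` in its first `Z`-slot, by the Leibniz rule. -/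
structure IsExt (n : ℕ) (ω : ℕ → List L → List A.leftCenter → S)
    (ωc : ℕ → List L → S → List A.leftCenter → S) : Prop where
  on_gen : ∀ (k : ℕ) (es : List L) (fs : List A.leftCenter) (f : A.leftCenter),
    2*(k+1) + es.length = n → fs.length = k →
    ωc k es (ι f) fs = ω (k+1) es (f :: fs)
  map_add : ∀ (k : ℕ) (es : List L) (fs : List A.leftCenter) (x y : S),
    2*(k+1) + es.length = n → fs.length = k →
    ωc k es (x + y) fs = ωc k es x fs + ωc k es y fs
  map_smul : ∀ (k : ℕ) (es : List L) (fs : List A.leftCenter) (c : 𝕜) (x : S),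
    2*(k+1) + es.length = n → fs.length = k →
    ωc k es (c • x) fs = c • ωc k es x fs
  mul_rule : ∀ (k : ℕ) (es : List L) (fs : List A.leftCenter) (x y : S),
    2*(k+1) + es.length = n → fs.length = k →
    ωc k es (x * y) fs = x * ωc k es y fs + y * ωc k es x fs

/-- The operation `ω ◇ η` built from the Leibniz-rule extension `ωc` of `ω`. -/
def cdiam (n m : ℕ) (ωc : ℕ → List L → S → List A.leftCenter → S)
    (η : ℕ → List L → List A.leftCenter → S) : ℕ → List L → List A.leftCenter → S :=
  fun k es fs => ∑ i ∈ Finset.range (k+1),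
    if 2*(i+1) ≤ n ∧ 2*(k-i) ≤ m then
      shSum (n - 2*i - 2) es fun es₁ es₂ =>
        shSumU (k-i) fs fun fs₁ fs₂ => ωc i es₁ (η (k-i) es₂ fs₁) fs₂
    else 0

/-- The operation `ω • η` built from chosen `φ`-preimages `ωt`, `ηt`. -/
noncomputable def cbull (n m : ℕ)
    (ωt ηt : ℕ → List L → List A.leftCenter → S ⊗[𝕜] L) :
    ℕ → List L → List A.leftCenter → S :=
  fun k es fs => (-1 : ℤ)^(m-1) • ∑ i ∈ Finset.range (k+1),
    if 2*i + 1 ≤ n ∧ 2*(k-i) + 1 ≤ m then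
      shSum (n - 2*i - 1) es fun es₁ es₂ =>
        shSumU i fs fun fs₁ fs₂ => pairT A S ι (ωt i es₁ fs₁) (ηt (k-i) es₂ fs₂)
    else 0

/-- The bracket `{ω, η} = ω•η + ω◇η − (−1)^{nm} η◇ω` of representable cochains. -/
noncomputable def cpbr (n m : ℕ)
    (ω η : ℕ → List L → List A.leftCenter → S)
    (ωt ηt : ℕ → List L → List A.leftCenter → S ⊗[𝕜] L)
    (ωc ηc : ℕ → List L → S → List A.leftCenter → S) :
    ℕ → List L → List A.leftCenter → S :=
  fun k es fs => cbull A S ι n m ωt ηt k es fs + cdiam A S n m ωc η k es fs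
    - (-1 : ℤ)^(n*m) • cdiam A S m n ηc ω k es fs

/-- The canonical 3-cochain `Θ`. -/
def ThetaC : ℕ → List L → List A.leftCenter → S :=
  fun k es fs => match k, es, fs with
    | 0, [e₁, e₂, e₃], [] => ι (A.spZ (A.br e₁ e₂) e₃)
    | 1, [e], [f] => - ι (A.spZ e (f : L))
    | _, _, _ => 0

/-- The 2-cochain `ζ` with `ζ₀ = (·,·)` and `ζ₁(f) = −2f`. -/
def zetaC : ℕ → List L → List A.leftCenter → S :=
  fun k es fs => match k, es, fs with
    | 0, [e₁, e₂], [] => ι (A.spZ e₁ e₂)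
    | 1, [], [f] => (-2 : 𝕜) • ι f
    | _, _, _ => 0

/-- The representable 1-cochain `e^♭ = (e, ·)`. -/
def eflat (e : L) : ℕ → List L → List A.leftCenter → S :=
  fun k es fs => match k, es, fs with
    | 0, [e'], [] => ι (A.spZ e e')
    | _, _, _ => 0

end Cochains

section Theorems

variable {𝕜 : Type u} [Field 𝕜] {L : Type v} [AddCommGroup L] [Module 𝕜 L]

namespace DReprAux

variable (A : LeibnizAlg 𝕜 L) (S : Type w) [CommRing S] [Algebra 𝕜 S]
variable (ι : A.leftCenter →ₗ[𝕜] S)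

lemma pairT_tmul (s t : S) (f e : L) :
    pairT A S ι (s ⊗ₜ[𝕜] f) (t ⊗ₜ[𝕜] e) = s * t * ι (A.spZ f e) := by
  simp [pairT, spS, TensorProduct.tensorTensorTensorComm_tmul, LeibnizAlg.spL]

/-- Representability of a function `L → S`. -/
def Rep (F : L → S) : Prop :=
  ∃ x : S ⊗[𝕜] L, ∀ e : L, pairT A S ι x ((1 : S) ⊗ₜ[𝕜] e) = F e

variable {A S ι}

lemma Rep.congr {F G : L → S} (h : Rep A S ι F) (hFG : ∀ e, F e = G e) : Rep A S ι G := by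
  obtain ⟨x, hx⟩ := h
  exact ⟨x, fun e => (hx e).trans (hFG e)⟩

lemma Rep.add {F G : L → S} (hF : Rep A S ι F) (hG : Rep A S ι G) :
    Rep A S ι (fun e => F e + G e) := by
  obtain ⟨x, hx⟩ := hF
  obtain ⟨y, hy⟩ := hG
  exact ⟨x + y, fun e => by rw [map_add, LinearMap.add_apply, hx, hy]⟩

lemma Rep.zsmul {F : L → S} (c : ℤ) (hF : Rep A S ι F) :
    Rep A S ι (fun e => c • F e) := by
  obtain ⟨x, hx⟩ := hF
  exact ⟨c • x, fun e => by rw [map_zsmul, LinearMap.smul_apply, hx]⟩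

lemma Rep.sum {α : Type*} (t : Finset α) (F : α → L → S)
    (hF : ∀ a ∈ t, Rep A S ι (F a)) :
    Rep A S ι (fun e => ∑ a ∈ t, F a e) := by
  classical
  induction t using Finset.induction_on with
  | empty => exact ⟨0, fun e => by simp⟩
  | insert _ _ hnotmem ih =>
    rename_i a t'
    have h1 := hF a (Finset.mem_insert_self a t')
    have h2 := ih (fun b hb => hF b (Finset.mem_insert_of_mem hb))
    exact (h1.add h2).congr (fun e => by rw [Finset.sum_insert hnotmem])

end DReprAux

namespace DReprAux

variable (A : LeibnizAlg 𝕜 L) (S : Type w) [CommRing S] [Algebra 𝕜 S]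
variable (ι : A.leftCenter →ₗ[𝕜] S)

lemma brZ_spZ (a f e : L) :
    A.brZ a (A.spZ f e) = A.spZ (A.br a f) e + A.spZ f (A.br a e) := by
  apply Subtype.ext
  show A.br a (A.sp f e) = A.sp (A.br a f) e + A.sp f (A.br a e)
  simp only [LeibnizAlg.sp, map_add]
  rw [A.leibniz a f e, A.leibniz a e f]
  abel

/-- The operator on `S ⊗ L` acting by a derivation on the left factor and the
bracket on the right factor. -/
noncomputable def Psi (D : S →ₗ[𝕜] S) (a : L) : (S ⊗[𝕜] L) →ₗ[𝕜] (S ⊗[𝕜] L) :=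
  LinearMap.rTensor L D + LinearMap.lTensor S (A.br a)

lemma pairT_deriv (ρ : L → Derivation 𝕜 S S)
    (hρ : ∀ (e : L) (f : A.leftCenter), ρ e (ι f) = ι (A.brZ e f))
    (a : L) (x : S ⊗[𝕜] L) (e : L) :
    ρ a (pairT A S ι x ((1:S) ⊗ₜ[𝕜] e))
      = pairT A S ι (Psi A S (ρ a).toLinearMap a x) ((1:S) ⊗ₜ[𝕜] e)
        + pairT A S ι x ((1:S) ⊗ₜ[𝕜] (A.br a e)) := by
  induction x using TensorProduct.induction_on with
  | zero => simp
  | tmul s f =>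
    rw [Psi]
    simp only [LinearMap.add_apply, LinearMap.rTensor_tmul, LinearMap.lTensor_tmul,
      map_add, pairT_tmul, mul_one]
    rw [Derivation.leibniz, hρ, brZ_spZ, map_add]
    simp only [Derivation.coeFn_coe, smul_eq_mul]
    ring
  | add x y hx hy =>
    simp only [map_add, LinearMap.add_apply] at *
    rw [hx, hy]
    ring

lemma pairT_mulLeft (t : S) (x y : S ⊗[𝕜] L) :
    pairT A S ι (LinearMap.rTensor L (LinearMap.mulLeft 𝕜 t) x) y
      = t * pairT A S ι x y := by
  induction x using TensorProduct.induction_on with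
  | zero => simp
  | tmul s f =>
    rw [LinearMap.rTensor_tmul]
    induction y using TensorProduct.induction_on with
    | zero => simp
    | tmul u e => rw [pairT_tmul, pairT_tmul, LinearMap.mulLeft_apply]; ring
    | add y₁ y₂ h1 h2 => simp only [map_add]; rw [h1, h2]; ring
  | add x₁ x₂ h1 h2 =>
    simp only [map_add, LinearMap.add_apply] at *
    rw [h1, h2]; ring

end DReprAux

namespace DReprAux

variable (A : LeibnizAlg 𝕜 L) (S : Type w) [CommRing S] [Algebra 𝕜 S]
variable (ι : A.leftCenter →ₗ[𝕜] S)

/-- The `down` algebra homomorphism from a `ULift`ed algebra. -/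
def downAlg (B : Type*) [CommRing B] [Algebra 𝕜 B] : ULift B →ₐ[𝕜] B :=
  { (ULift.ringEquiv : ULift B ≃+* B).toRingHom with
    commutes' := fun r => by rw [ULift.algebraMap_eq]; rfl }

/-- The `up` algebra homomorphism to a `ULift`ed algebra. -/
def upAlg (B : Type*) [CommRing B] [Algebra 𝕜 B] : B →ₐ[𝕜] ULift B :=
  { (ULift.ringEquiv : ULift B ≃+* B).symm.toRingHom with
    commutes' := fun r => by rw [ULift.algebraMap_eq]; rfl }

lemma adjoin_range_eq_top (hS : IsSymAlg S ι) :
    Algebra.adjoin 𝕜 (Set.range ι) = ⊤ := by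
  set B := Algebra.adjoin 𝕜 (Set.range ι) with hB
  -- map into the ULift of B
  have hmem : ∀ z : A.leftCenter, ι z ∈ B := fun z => Algebra.subset_adjoin ⟨z, rfl⟩
  let g : A.leftCenter →ₗ[𝕜] ULift.{max u v} B :=
    { toFun := fun z => ⟨⟨ι z, hmem z⟩⟩
      map_add' := fun x y => by apply ULift.ext; exact Subtype.ext (by simp)
      map_smul' := fun c x => by apply ULift.ext; exact Subtype.ext (by simp) }
  obtain ⟨h, hh, -⟩ := hS (ULift.{max u v} B) g
  -- the composite S → ULift B → B → S fixes ι
  let j : S →ₐ[𝕜] S := B.val.comp ((downAlg (𝕜 := 𝕜) ↥B).comp h)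
  have hj : ∀ z, j (ι z) = ι z := by
    intro z
    show B.val (downAlg (𝕜 := 𝕜) ↥B (h (ι z))) = ι z
    rw [hh z]
    rfl
  -- uniqueness in ULift S forces j = id
  obtain ⟨u, -, hu⟩ := hS (ULift.{max u v} S) ((upAlg (𝕜 := 𝕜) S).toLinearMap.comp ι)
  have h1 : (upAlg (𝕜 := 𝕜) S).comp j = u := by
    apply hu
    intro z
    show upAlg (𝕜 := 𝕜) S (j (ι z)) = upAlg (𝕜 := 𝕜) S (ι z)
    rw [hj]
  have h2 : (upAlg (𝕜 := 𝕜) S).comp (AlgHom.id 𝕜 S) = u := by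
    apply hu
    intro z
    rfl
  have hjid : ∀ s : S, j s = s := by
    intro s
    have := congrArg (fun φ => (downAlg (𝕜 := 𝕜) S) (φ s)) (h1.trans h2.symm)
    simpa [downAlg, upAlg] using this
  rw [eq_top_iff]
  intro s _
  have : j s ∈ B := (downAlg (𝕜 := 𝕜) ↥B (h s)).2
  rwa [hjid s] at this

lemma rho_rep (hS : IsSymAlg S ι) (ρ : L → Derivation 𝕜 S S)
    (hρ : ∀ (e : L) (f : A.leftCenter), ρ e (ι f) = ι (A.brZ e f))
    (s : S) : Rep A S ι (fun e => ρ e s) := by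
  have hs : s ∈ Algebra.adjoin 𝕜 (Set.range ι) := by
    rw [adjoin_range_eq_top A S ι hS]; trivial
  induction hs using Algebra.adjoin_induction with
  | mem x hx =>
    obtain ⟨f, rfl⟩ := hx
    refine ⟨(1:S) ⊗ₜ[𝕜] (f : L), fun e => ?_⟩
    show pairT A S ι ((1:S) ⊗ₜ[𝕜] (f : L)) ((1:S) ⊗ₜ[𝕜] e) = ρ e (ι f)
    rw [pairT_tmul, one_mul, one_mul, hρ]
    congr 1
    apply Subtype.ext
    show A.sp (f:L) e = A.br e (f:L)
    rw [LeibnizAlg.sp, f.2 e, zero_add]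
  | algebraMap r =>
    exact ⟨0, fun e => by simp⟩
  | add x y hx hy ihx ihy =>
    exact (ihx.add ihy).congr (fun e => (map_add (ρ e) x y).symm)
  | mul x y hx hy ihx ihy =>
    obtain ⟨u, hu⟩ := ihx
    obtain ⟨v, hv⟩ := ihy
    have hu' : ∀ e : L, pairT A S ι u ((1:S) ⊗ₜ[𝕜] e) = ρ e x := hu
    have hv' : ∀ e : L, pairT A S ι v ((1:S) ⊗ₜ[𝕜] e) = ρ e y := hv
    refine ⟨LinearMap.rTensor L (LinearMap.mulLeft 𝕜 x) v
      + LinearMap.rTensor L (LinearMap.mulLeft 𝕜 y) u, fun e => ?_⟩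
    show _ = ρ e (x * y)
    rw [map_add, LinearMap.add_apply, pairT_mulLeft, pairT_mulLeft, hu', hv',
      Derivation.leibniz]
    simp only [smul_eq_mul]

end DReprAux

namespace DReprAux

lemma getD_concat {α : Type*} (l : List α) (e d : α) :
    (l ++ [e]).getD l.length d = e := by simp [List.getD]

lemma eraseIdx_concat {α : Type*} (l : List α) (e : α) :
    (l ++ [e]).eraseIdx l.length = l := by
  induction l with
  | nil => rfl
  | cons x xs ih => simp [List.eraseIdx, ih]

lemma set_concat {α : Type*} (l : List α) (e v : α) :
    (l ++ [e]).set l.length v = l ++ [v] := by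
  rw [List.set_append]
  simp

lemma set_append_left {α : Type*} (l l' : List α) (i : ℕ) (v : α) (h : i < l.length) :
    (l ++ l').set i v = l.set i v ++ l' := by
  rw [List.set_append, if_pos h]

end DReprAux

open DReprAux in
theorem d_repr (A : LeibnizAlg 𝕜 L) (S : Type w) [CommRing S] [Algebra 𝕜 S]
    (ι : A.leftCenter →ₗ[𝕜] S) (hS : IsSymAlg S ι)
    (ρ : L → Derivation 𝕜 S S)
    (hρ : ∀ (e : L) (f : A.leftCenter), ρ e (ι f) = ι (A.brZ e f))
    (n : ℕ) (ω : ℕ → List L → List A.leftCenter → S)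
    (hω : IsCochain A S n ω) (hrep : IsRepr A S ι n ω) :
    IsRepr A S ι (n+1) (fun k es fs => cd0 A S ρ ω k es fs + cdel A S ω k es fs) := by
  intro k es fs hlen hfs
  classical
  -- Step 1: rewrite the cochain as a sum of representable pieces
  have hMain : ∀ e : L,
      cd0 A S ρ ω k (es ++ [e]) fs + cdel A S ω k (es ++ [e]) fs
      = (∑ a ∈ Finset.range es.length,
            ((-1:ℤ)^a • ρ (es.getD a 0) (ω k (es.eraseIdx a ++ [e]) fs)
              + (-1:ℤ)^(a+1) • ω k (es.eraseIdx a ++ [A.br (es.getD a 0) e]) fs))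
        + (-1:ℤ)^es.length • ρ e (ω k es fs)
        + (∑ a ∈ Finset.range es.length, ∑ b ∈ Finset.Ico (a+1) es.length,
            (-1:ℤ)^(a+1) •
              ω k ((es.eraseIdx a).set (b-1) (A.br (es.getD a 0) (es.getD b 0)) ++ [e]) fs)
        + ∑ j ∈ Finset.range fs.length,
            ω (k-1) (((fs.getD j 0 : A.leftCenter) : L) :: (es ++ [e])) (fs.eraseIdx j) := by
    intro e
    simp only [cd0, cdel]
    have hl : (es ++ [e]).length = es.length + 1 := by simp
    rw [hl, Finset.sum_range_succ, Finset.sum_range_succ, Finset.Ico_self,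
      Finset.sum_empty, add_zero, getD_concat, eraseIdx_concat]
    have hPsum : (∑ a ∈ Finset.range es.length,
        (-1:ℤ)^a • ρ ((es ++ [e]).getD a 0) (ω k ((es ++ [e]).eraseIdx a) fs))
        = ∑ a ∈ Finset.range es.length,
            (-1:ℤ)^a • ρ (es.getD a 0) (ω k (es.eraseIdx a ++ [e]) fs) := by
      refine Finset.sum_congr rfl fun a ha => ?_
      have ha' := Finset.mem_range.mp ha
      rw [List.getD_append _ _ _ _ ha', List.eraseIdx_append_of_lt_length ha']
    have hQsum : (∑ a ∈ Finset.range es.length, ∑ b ∈ Finset.Ico (a+1) (es.length+1),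
        (-1:ℤ)^(a+1) • ω k (((es ++ [e]).eraseIdx a).set (b-1)
          (A.br ((es ++ [e]).getD a 0) ((es ++ [e]).getD b 0))) fs)
        = ∑ a ∈ Finset.range es.length,
            ((∑ b ∈ Finset.Ico (a+1) es.length, (-1:ℤ)^(a+1) •
              ω k ((es.eraseIdx a).set (b-1) (A.br (es.getD a 0) (es.getD b 0)) ++ [e]) fs)
            + (-1:ℤ)^(a+1) • ω k (es.eraseIdx a ++ [A.br (es.getD a 0) e]) fs) := by
      refine Finset.sum_congr rfl fun a ha => ?_
      have ha' := Finset.mem_range.mp ha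
      have hlen2 : (es.eraseIdx a).length = es.length - 1 := by
        rw [List.length_eraseIdx]
        simp [ha']
      rw [Finset.sum_Ico_succ_top (Nat.succ_le_of_lt ha')]
      congr 1
      · refine Finset.sum_congr rfl fun b hb => ?_
        obtain ⟨hb1, hb2⟩ := Finset.mem_Ico.mp hb
        have hbl : b - 1 < (es.eraseIdx a).length := by omega
        rw [List.getD_append _ _ _ _ ha', List.getD_append _ _ _ _ hb2,
          List.eraseIdx_append_of_lt_length ha', set_append_left _ _ _ _ hbl]
      · rw [List.getD_append _ _ _ _ ha', getD_concat,
          List.eraseIdx_append_of_lt_length ha']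
        have : es.length - 1 = (es.eraseIdx a).length := hlen2.symm
        rw [this, set_concat]
    rw [hPsum, hQsum, Finset.sum_add_distrib, Finset.sum_add_distrib]
    abel
  -- Step 2: each piece is representable
  have hT1 : Rep A S ι (fun e => ∑ a ∈ Finset.range es.length,
      ((-1:ℤ)^a • ρ (es.getD a 0) (ω k (es.eraseIdx a ++ [e]) fs)
        + (-1:ℤ)^(a+1) • ω k (es.eraseIdx a ++ [A.br (es.getD a 0) e]) fs)) := by
    refine Rep.sum (Finset.range es.length) _ fun a ha => ?_
    have ha' := Finset.mem_range.mp ha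
    have h1 : 2*k + ((es.eraseIdx a).length + 1) = n := by
      rw [List.length_eraseIdx]
      simp only [ha', if_true]
      omega
    obtain ⟨x, hx⟩ := hrep k (es.eraseIdx a) fs h1 hfs
    refine ⟨(-1:ℤ)^a • Psi A S ((ρ (es.getD a 0)) : S →ₗ[𝕜] S) (es.getD a 0) x, fun e => ?_⟩
    show _ = (-1:ℤ)^a • ρ (es.getD a 0) (ω k (es.eraseIdx a ++ [e]) fs)
      + (-1:ℤ)^(a+1) • ω k (es.eraseIdx a ++ [A.br (es.getD a 0) e]) fs
    rw [map_zsmul, LinearMap.smul_apply]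
    have hd := pairT_deriv A S ι ρ hρ (es.getD a 0) x e
    rw [hx e, hx (A.br (es.getD a 0) e)] at hd
    rw [hd, pow_succ]
    module
  have hT2 : Rep A S ι (fun e => (-1:ℤ)^es.length • ρ e (ω k es fs)) :=
    Rep.zsmul _ (rho_rep A S ι hS ρ hρ (ω k es fs))
  have hT3 : Rep A S ι (fun e => ∑ a ∈ Finset.range es.length,
      ∑ b ∈ Finset.Ico (a+1) es.length, (-1:ℤ)^(a+1) •
        ω k ((es.eraseIdx a).set (b-1) (A.br (es.getD a 0) (es.getD b 0)) ++ [e]) fs) := by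
    refine Rep.sum (Finset.range es.length) _ fun a ha => ?_
    refine Rep.sum (Finset.Ico (a+1) es.length) _ fun b hb => ?_
    have ha' := Finset.mem_range.mp ha
    have h1 : 2*k + (((es.eraseIdx a).set (b-1) (A.br (es.getD a 0) (es.getD b 0))).length + 1)
        = n := by
      rw [List.length_set, List.length_eraseIdx]
      simp only [ha', if_true]
      omega
    obtain ⟨x, hx⟩ := hrep k ((es.eraseIdx a).set (b-1) (A.br (es.getD a 0) (es.getD b 0))) fs
      h1 hfs
    refine ⟨(-1:ℤ)^(a+1) • x, fun e => ?_⟩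
    rw [map_zsmul, LinearMap.smul_apply, hx e]
  have hT4 : Rep A S ι (fun e => ∑ j ∈ Finset.range fs.length,
      ω (k-1) (((fs.getD j 0 : A.leftCenter) : L) :: (es ++ [e])) (fs.eraseIdx j)) := by
    refine Rep.sum (Finset.range fs.length) _ fun j hj => ?_
    have hj' := Finset.mem_range.mp hj
    have h1 : 2*(k-1) + ((((fs.getD j 0 : A.leftCenter) : L) :: es).length + 1) = n := by
      simp only [List.length_cons]
      omega
    have h2 : (fs.eraseIdx j).length = k - 1 := by
      rw [List.length_eraseIdx, if_pos hj', hfs]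
    obtain ⟨x, hx⟩ := hrep (k-1) (((fs.getD j 0 : A.leftCenter) : L) :: es) (fs.eraseIdx j) h1 h2
    exact ⟨x, fun e => hx e⟩
  exact ((((hT1.add hT2).add hT3).add hT4).congr (fun e => (hMain e).symm))

end Theorems
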